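/- Let X be a random feature with values in a measurable space 𝒳 and Y a label with values in {0,1}, with source distribution P and target distribution Q of (X,Y), p = P[Y=1] ∈ (0,1) and q = Q[Y=1] ∈ (0,1). Suppose P and Q are related through label shift, i.e., P[X ∈ M | Y = y] = Q[X ∈ M | Y = y] for all measurable M ⊆ 𝒳 and y ∈ {0,1}, and let η_P(X) be a version of P[Y=1 | X] with 0 < η_P(X) < 1 P-almost surely. Then Q-almost surely, Q[Y=1 | X] = ((q/p)·η_P(X)) / ((q/p)·η_P(X) + ((1−q)/(1−p))·(1−η_P(X))). -/

import Mathlib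

open MeasureTheory ProbabilityTheory
open scoped ENNReal NNReal

/-- Posterior correction formula (Saerens et al.): under label shift between the source
distribution `P` and the target distribution `Q` of a feature-label pair, with source prior
`p = P[Y=1] ∈ (0,1)`, target prior `q = Q[Y=1] ∈ (0,1)` and source posterior `η_P` satisfying
`0 < η_P(X) < 1` `P`-a.s., the target posterior satisfies `Q`-almost surely
`Q[Y=1 | X] = ((q/p)·η_P(X)) / ((q/p)·η_P(X) + ((1−q)/(1−p))·(1−η_P(X)))`. -/
theorem posterior_correction_labelShift
    {𝒳 : Type*} [MeasurableSpace 𝒳]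
    (P Q : Measure (𝒳 × Bool)) [IsProbabilityMeasure P] [IsProbabilityMeasure Q]
    (p q : ℝ)
    (hpdef : (P {ω : 𝒳 × Bool | ω.2 = true}).toReal = p) (hp : p ∈ Set.Ioo (0 : ℝ) 1)
    (hqdef : (Q {ω : 𝒳 × Bool | ω.2 = true}).toReal = q) (hq : q ∈ Set.Ioo (0 : ℝ) 1)
    -- label shift: the class-conditional feature distributions agree under `P` and `Q`
    (hshift : ∀ y : Bool,
      (P[|{ω : 𝒳 × Bool | ω.2 = y}]).map Prod.fst = (Q[|{ω : 𝒳 × Bool | ω.2 = y}]).map Prod.fst)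
    (ηP : 𝒳 → ℝ) (hηP : Measurable ηP)
    -- `ηP` is a version of `P[Y = 1 | X]`
    (hηPver : ∀ M : Set 𝒳, MeasurableSet M →
      ∫ x in M, ηP x ∂(P.map Prod.fst) = (P (M ×ˢ {true})).toReal)
    -- `0 < η_P(X) < 1` holds `P`-almost surely
    (hηP01 : ∀ᵐ x ∂(P.map Prod.fst), ηP x ∈ Set.Ioo (0 : ℝ) 1)
    (ηQ : 𝒳 → ℝ) (hηQ : Measurable ηQ)
    -- `ηQ` is a version of `Q[Y = 1 | X]`
    (hηQver : ∀ M : Set 𝒳, MeasurableSet M →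
      ∫ x in M, ηQ x ∂(Q.map Prod.fst) = (Q (M ×ˢ {true})).toReal) :
    ∀ᵐ x ∂(Q.map Prod.fst),
      ηQ x = (q / p * ηP x) / (q / p * ηP x + (1 - q) / (1 - p) * (1 - ηP x)) := by
  obtain ⟨hp0, hp1⟩ := hp
  obtain ⟨hq0, hq1⟩ := hq
  set Px := P.map Prod.fst with hPx
  set Qx := Q.map Prod.fst with hQxdef
  haveI hPxprob : IsProbabilityMeasure Px := Measure.isProbabilityMeasure_map measurable_fst.aemeasurable
  haveI hQxprob : IsProbabilityMeasure Qx := Measure.isProbabilityMeasure_map measurable_fst.aemeasurable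
  have hSmeas : ∀ y : Bool, MeasurableSet {ω : 𝒳 × Bool | ω.2 = y} := fun y =>
    measurable_snd (measurableSet_singleton y)
  have hfib : ∀ (y : Bool) (M : Set 𝒳),
      {ω : 𝒳 × Bool | ω.2 = y} ∩ Prod.fst ⁻¹' M = M ×ˢ ({y} : Set Bool) := by
    intro y M; ext ω
    simp only [Set.mem_inter_iff, Set.mem_setOf_eq, Set.mem_preimage, Set.mem_prod,
      Set.mem_singleton_iff]
    tauto
  -- the prior of the `false` class
  have hcompl : {ω : 𝒳 × Bool | ω.2 = false} = {ω : 𝒳 × Bool | ω.2 = true}ᶜ := by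
    ext ω; simp
  have hpFdef : (P {ω : 𝒳 × Bool | ω.2 = false}).toReal = 1 - p := by
    rw [hcompl, measure_compl (hSmeas true) (measure_ne_top _ _), measure_univ,
      ENNReal.toReal_sub_of_le prob_le_one ENNReal.one_ne_top, ENNReal.toReal_one, hpdef]
  have hqFdef : (Q {ω : 𝒳 × Bool | ω.2 = false}).toReal = 1 - q := by
    rw [hcompl, measure_compl (hSmeas true) (measure_ne_top _ _), measure_univ,
      ENNReal.toReal_sub_of_le prob_le_one ENNReal.one_ne_top, ENNReal.toReal_one, hqdef]
  -- label shift in terms of joint measures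
  have key : ∀ (y : Bool) (M : Set 𝒳), MeasurableSet M →
      (P {ω : 𝒳 × Bool | ω.2 = y}).toReal⁻¹ * (P (M ×ˢ ({y} : Set Bool))).toReal
      = (Q {ω : 𝒳 × Bool | ω.2 = y}).toReal⁻¹ * (Q (M ×ˢ ({y} : Set Bool))).toReal := by
    intro y M hM
    have h1 : (P[|{ω : 𝒳 × Bool | ω.2 = y}]).map Prod.fst M
        = (Q[|{ω : 𝒳 × Bool | ω.2 = y}]).map Prod.fst M := by rw [hshift y]
    rw [Measure.map_apply measurable_fst hM, Measure.map_apply measurable_fst hM,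
      cond_apply (hSmeas y), cond_apply (hSmeas y), hfib] at h1
    have h2 := congrArg ENNReal.toReal h1
    rwa [ENNReal.toReal_mul, ENNReal.toReal_mul, ENNReal.toReal_inv, ENNReal.toReal_inv] at h2
  have keyT : ∀ M : Set 𝒳, MeasurableSet M →
      (Q (M ×ˢ ({true} : Set Bool))).toReal
        = q / p * (P (M ×ˢ ({true} : Set Bool))).toReal := by
    intro M hM
    have h := key true M hM
    rw [hpdef, hqdef] at h
    have hqne : q ≠ 0 := ne_of_gt hq0
    have h2 : (Q (M ×ˢ ({true} : Set Bool))).toReal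
        = q * (q⁻¹ * (Q (M ×ˢ ({true} : Set Bool))).toReal) := by
      field_simp
    rw [h2, ← h]; ring
  have keyF : ∀ M : Set 𝒳, MeasurableSet M →
      (Q (M ×ˢ ({false} : Set Bool))).toReal
        = (1 - q) / (1 - p) * (P (M ×ˢ ({false} : Set Bool))).toReal := by
    intro M hM
    have h := key false M hM
    rw [hpFdef, hqFdef] at h
    have hqne : (1 : ℝ) - q ≠ 0 := by intro h'; linarith
    have h2 : (Q (M ×ˢ ({false} : Set Bool))).toReal
        = (1 - q) * ((1 - q)⁻¹ * (Q (M ×ˢ ({false} : Set Bool))).toReal) := by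
      field_simp
    rw [h2, ← h]; ring
  -- splitting the preimage of a set over the two labels
  have hsplit : ∀ (M : Set 𝒳), MeasurableSet M → ∀ μ : Measure (𝒳 × Bool),
      μ (Prod.fst ⁻¹' M) = μ (M ×ˢ ({true} : Set Bool)) + μ (M ×ˢ ({false} : Set Bool)) := by
    intro M hM μ
    have hU : Prod.fst ⁻¹' M = (M ×ˢ ({true} : Set Bool)) ∪ (M ×ˢ ({false} : Set Bool)) := by
      ext ⟨x, b⟩; cases b <;> simp
    have hdis : Disjoint (M ×ˢ ({true} : Set Bool)) (M ×ˢ ({false} : Set Bool)) := by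
      rw [Set.disjoint_left]
      rintro ⟨x, b⟩ h1 h2
      simp only [Set.mem_prod, Set.mem_singleton_iff] at h1 h2
      rw [h1.2] at h2
      exact absurd h2.2 (by simp)
    rw [hU, measure_union hdis (hM.prod (measurableSet_singleton false))]
  -- integrability of ηP
  have hηPint : Integrable ηP Px := by
    refine Integrable.mono' (integrable_const 1) hηP.aestronglyMeasurable ?_
    filter_upwards [hηP01] with x hx
    rw [Real.norm_eq_abs, abs_le]
    exact ⟨by linarith [hx.1], le_of_lt hx.2⟩
  have h1mint : Integrable (fun x => 1 - ηP x) Px := (integrable_const 1).sub hηPint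
  -- the `false` fibers of `P` in terms of ηP
  have hPfInt : ∀ M : Set 𝒳, MeasurableSet M →
      (P (M ×ˢ ({false} : Set Bool))).toReal = ∫ x in M, (1 - ηP x) ∂Px := by
    intro M hM
    have h1 : (Px M).toReal
        = (P (M ×ˢ ({true} : Set Bool))).toReal + (P (M ×ˢ ({false} : Set Bool))).toReal := by
      rw [hPx, Measure.map_apply measurable_fst hM, hsplit M hM P,
        ENNReal.toReal_add (measure_ne_top _ _) (measure_ne_top _ _)]
    have h2 : ∫ x in M, (1 - ηP x) ∂Px = (Px M).toReal - ∫ x in M, ηP x ∂Px := by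
      rw [integral_sub (integrableOn_const (C := (1 : ℝ)) (s := M) (μ := Px) (measure_ne_top _ _))
        hηPint.integrableOn]
      simp [Measure.real]
    rw [h2, hηPver M hM]
    linarith
  -- the density of Qx with respect to Px
  set w : 𝒳 → ℝ := fun x => q / p * ηP x + (1 - q) / (1 - p) * (1 - ηP x) with hw
  have hwmeas : Measurable w := by
    rw [hw]
    exact (hηP.const_mul _).add ((measurable_const.sub hηP).const_mul _)
  have hwpos : ∀ᵐ x ∂Px, 0 < w x := by
    filter_upwards [hηP01] with x hx
    have h1 : 0 < q / p := div_pos hq0 hp0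
    have h2 : 0 < (1 - q) / (1 - p) := div_pos (by linarith) (by linarith)
    simp only [hw]
    exact add_pos (mul_pos h1 hx.1) (mul_pos h2 (by linarith [hx.2]))
  have hwint : Integrable w Px := by
    rw [hw]
    exact (hηPint.const_mul _).add (h1mint.const_mul _)
  have hQM : ∀ M : Set 𝒳, MeasurableSet M → (Qx M).toReal = ∫ x in M, w x ∂Px := by
    intro M hM
    have h0 : (Qx M).toReal
        = (Q (M ×ˢ ({true} : Set Bool))).toReal + (Q (M ×ˢ ({false} : Set Bool))).toReal := by
      rw [hQxdef, Measure.map_apply measurable_fst hM, hsplit M hM Q,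
        ENNReal.toReal_add (measure_ne_top _ _) (measure_ne_top _ _)]
    have hA : IntegrableOn (fun x => q / p * ηP x) M Px := hηPint.integrableOn.const_mul _
    have hB : IntegrableOn (fun x => (1 - q) / (1 - p) * (1 - ηP x)) M Px :=
      h1mint.integrableOn.const_mul _
    have hrhs : ∫ x in M, w x ∂Px
        = q / p * ∫ x in M, ηP x ∂Px + (1 - q) / (1 - p) * ∫ x in M, (1 - ηP x) ∂Px := by
      simp only [hw]
      rw [integral_add hA hB, integral_const_mul, integral_const_mul]
    rw [h0, keyT M hM, keyF M hM, hrhs, hηPver M hM, hPfInt M hM]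
  have hQeq : Qx = Px.withDensity (fun x => ENNReal.ofReal (w x)) := by
    ext M hM
    rw [withDensity_apply _ hM,
      ← ofReal_integral_eq_lintegral_ofReal hwint.integrableOn
        (ae_restrict_of_ae (hwpos.mono fun x hx => hx.le)),
      ← hQM M hM, ENNReal.ofReal_toReal (measure_ne_top _ _)]
  have hac : Qx ≪ Px := by
    rw [hQeq]; exact withDensity_absolutelyContinuous _ _
  -- the corrected posterior
  set g : 𝒳 → ℝ :=
    fun x => (q / p * ηP x) / (q / p * ηP x + (1 - q) / (1 - p) * (1 - ηP x)) with hg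
  have hgmeas : Measurable g := by
    rw [hg]
    exact (hηP.const_mul _).div
      ((hηP.const_mul _).add ((measurable_const.sub hηP).const_mul _))
  have hkey : ∀ᵐ x ∂Px, (0 ≤ g x ∧ g x ≤ 1) ∧ g x * w x = q / p * ηP x := by
    filter_upwards [hηP01] with x hx
    have ha : 0 < q / p * ηP x := mul_pos (div_pos hq0 hp0) hx.1
    have hb : 0 < (1 - q) / (1 - p) * (1 - ηP x) :=
      mul_pos (div_pos (by linarith) (by linarith)) (by linarith [hx.2])
    simp only [hg, hw]
    refine ⟨⟨div_nonneg ha.le (by linarith), ?_⟩, ?_⟩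
    · rw [div_le_one (by linarith)]; linarith
    · exact div_mul_cancel₀ _ (ne_of_gt (add_pos ha hb))
  have hkeyQ : ∀ᵐ x ∂Qx, (0 ≤ g x ∧ g x ≤ 1) ∧ g x * w x = q / p * ηP x :=
    hkey.filter_mono hac.ae_le
  have hg01 : ∀ᵐ x ∂Qx, 0 ≤ g x ∧ g x ≤ 1 := hkeyQ.mono fun x hx => hx.1
  have hgint : Integrable g Qx := by
    refine Integrable.mono' (integrable_const 1) hgmeas.aestronglyMeasurable ?_
    filter_upwards [hg01] with x hx
    rw [Real.norm_eq_abs, abs_le]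
    exact ⟨by linarith [hx.1], hx.2⟩
  -- g is a version of the Q-posterior
  have hgver : ∀ M : Set 𝒳, MeasurableSet M →
      ∫ x in M, g x ∂Qx = (Q (M ×ˢ ({true} : Set Bool))).toReal := by
    intro M hM
    have hdens : (fun x => ENNReal.ofReal (w x))
        = fun x => ((w x).toNNReal : ℝ≥0∞) := rfl
    have h1 : ∫ x in M, g x ∂Qx = ∫ x in M, (w x).toNNReal • g x ∂Px := by
      rw [hQeq, hdens]
      exact setIntegral_withDensity_eq_setIntegral_smul₀
        (hwmeas.real_toNNReal.aemeasurable) g hM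
    have h2 : ∀ᵐ x ∂Px.restrict M,
        (w x).toNNReal • g x = g x * w x := by
      filter_upwards [ae_restrict_of_ae hwpos] with x hx
      rw [NNReal.smul_def, smul_eq_mul, Real.coe_toNNReal _ hx.le, mul_comm]
    have h3 : ∀ᵐ x ∂Px.restrict M, g x * w x = q / p * ηP x :=
      ae_restrict_of_ae (hkey.mono fun x hx => hx.2)
    rw [h1, integral_congr_ae h2, integral_congr_ae h3, integral_const_mul,
      hηPver M hM, ← keyT M hM]
  -- conclusion: ηQ = g almost everywhere
  have main : ∀ᵐ x ∂Qx, ηQ x = g x := by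
    set S : ℕ → Set 𝒳 := fun n => {x | g x < ηQ x} ∩ {x | ηQ x ≤ (n : ℝ)} with hS
    set T : ℕ → Set 𝒳 := fun n => {x | ηQ x < g x} ∩ {x | -(n : ℝ) ≤ ηQ x} with hT
    have hSm : ∀ n, MeasurableSet (S n) := fun n =>
      (measurableSet_lt hgmeas hηQ).inter (measurableSet_le hηQ measurable_const)
    have hTm : ∀ n, MeasurableSet (T n) := fun n =>
      (measurableSet_lt hηQ hgmeas).inter (measurableSet_le measurable_const hηQ)
    have hSnull : ∀ n, Qx (S n) = 0 := by
      intro n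
      have hbound : ∀ᵐ x ∂Qx.restrict (S n), ‖ηQ x‖ ≤ (n : ℝ) := by
        filter_upwards [ae_restrict_mem (hSm n), ae_restrict_of_ae hg01] with x hx hg0
        have h1 : g x < ηQ x := hx.1
        have h2 : ηQ x ≤ (n : ℝ) := hx.2
        rw [Real.norm_eq_abs, abs_le]
        exact ⟨by linarith [hg0.1, Nat.cast_nonneg (α := ℝ) n], h2⟩
      have hIntS : IntegrableOn ηQ (S n) Qx :=
        Integrable.mono' (integrable_const _) hηQ.aestronglyMeasurable.restrict hbound
      have hIntg : IntegrableOn g (S n) Qx := hgint.integrableOn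
      have hzero : ∫ x in S n, (ηQ x - g x) ∂Qx = 0 := by
        rw [integral_sub hIntS hIntg, hηQver _ (hSm n), hgver _ (hSm n), sub_self]
      have hnn : 0 ≤ᵐ[Qx.restrict (S n)] fun x => ηQ x - g x := by
        filter_upwards [ae_restrict_mem (hSm n)] with x hx
        exact sub_nonneg.mpr hx.1.le
      have heq0 := (setIntegral_eq_zero_iff_of_nonneg_ae hnn (hIntS.sub hIntg)).mp hzero
      have hfalse : ∀ᵐ x ∂Qx.restrict (S n), False := by
        filter_upwards [ae_restrict_mem (hSm n), heq0] with x hx h0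
        have : g x < ηQ x := hx.1
        simp only [Pi.zero_apply] at h0
        linarith
      have hres : Qx.restrict (S n) = 0 :=
        MeasureTheory.ae_eq_bot.mp (Filter.eventually_false_iff_eq_bot.mp hfalse)
      rw [← Measure.restrict_apply_self, hres]
      simp
    have hTnull : ∀ n, Qx (T n) = 0 := by
      intro n
      have hbound : ∀ᵐ x ∂Qx.restrict (T n), ‖ηQ x‖ ≤ max (n : ℝ) 1 := by
        filter_upwards [ae_restrict_mem (hTm n), ae_restrict_of_ae hg01] with x hx hg0
        have h1 : ηQ x < g x := hx.1
        have h2 : -(n : ℝ) ≤ ηQ x := hx.2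
        rw [Real.norm_eq_abs, abs_le]
        constructor
        · have := le_max_left (n : ℝ) 1; linarith
        · have := le_max_right (n : ℝ) 1; linarith [hg0.2]
      have hIntT : IntegrableOn ηQ (T n) Qx :=
        Integrable.mono' (integrable_const _) hηQ.aestronglyMeasurable.restrict hbound
      have hIntg : IntegrableOn g (T n) Qx := hgint.integrableOn
      have hzero : ∫ x in T n, (g x - ηQ x) ∂Qx = 0 := by
        rw [integral_sub hIntg hIntT, hηQver _ (hTm n), hgver _ (hTm n), sub_self]
      have hnn : 0 ≤ᵐ[Qx.restrict (T n)] fun x => g x - ηQ x := by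
        filter_upwards [ae_restrict_mem (hTm n)] with x hx
        exact sub_nonneg.mpr hx.1.le
      have heq0 := (setIntegral_eq_zero_iff_of_nonneg_ae hnn (hIntg.sub hIntT)).mp hzero
      have hfalse : ∀ᵐ x ∂Qx.restrict (T n), False := by
        filter_upwards [ae_restrict_mem (hTm n), heq0] with x hx h0
        have : ηQ x < g x := hx.1
        simp only [Pi.zero_apply] at h0
        linarith
      have hres : Qx.restrict (T n) = 0 :=
        MeasureTheory.ae_eq_bot.mp (Filter.eventually_false_iff_eq_bot.mp hfalse)
      rw [← Measure.restrict_apply_self, hres]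
      simp
    have hsub : {x | ¬ ηQ x = g x} ⊆ (⋃ n, S n) ∪ ⋃ n, T n := by
      intro x hx
      rcases lt_or_gt_of_ne (hx : ηQ x ≠ g x) with h | h
      · right
        refine Set.mem_iUnion.mpr ⟨⌈-ηQ x⌉₊, ⟨h, ?_⟩⟩
        show -((⌈-ηQ x⌉₊ : ℕ) : ℝ) ≤ ηQ x
        exact neg_le.mpr (Nat.le_ceil (-ηQ x))
      · left
        refine Set.mem_iUnion.mpr ⟨⌈ηQ x⌉₊, ⟨h, ?_⟩⟩
        show ηQ x ≤ ((⌈ηQ x⌉₊ : ℕ) : ℝ)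
        exact Nat.le_ceil (ηQ x)
    have hnull : Qx {x | ¬ ηQ x = g x} = 0 :=
      measure_mono_null hsub
        (measure_union_null (measure_iUnion_null hSnull) (measure_iUnion_null hTnull))
    rw [Filter.eventually_iff, mem_ae_iff]
    exact hnull
  filter_upwards [main] with x hx
  rw [hg] at hx
  exact hx
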